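/- arXiv:1201.1375 — 4 statements merged into one kernel-verified Lean document; each statement's English description precedes it below -/
import Mathlib

section
/- Suppose there exist constants $\lambda>0$ and $C\ge 0$ such that $\pi_k\ge\lambda$ for all $k\in U$ and $n\,\max_{k\neq l}|\pi_{kl}-\pi_k\pi_l|\le C$, where $n>0$. Then for any real numbers $x_1,\dots,x_N$ with $|x_k|\le 1$ for all $k$, $\operatorname{Var}\big(N^{-1}\sum_{k\in U}(I_k/\pi_k)x_k\big) \le \frac{1-\lambda}{\lambda N} + \frac{C}{\lambda^2 n}$. -/
open MeasureTheory ProbabilityTheory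

/-- Variance bound for the normalized Horvitz–Thompson estimator of a bounded variable. -/
theorem stmt2 {Ω : Type*} [MeasurableSpace Ω] (μ : Measure Ω) [IsProbabilityMeasure μ]
    (N : ℕ) (hN : 0 < N) (I : Fin N → Ω → ℝ) (π : Fin N → ℝ) (πkl : Fin N → Fin N → ℝ)
    (lam C n : ℝ) (hlam : 0 < lam) (hC : 0 ≤ C) (hn : 0 < n)
    (hind : ∀ k ω, I k ω = 0 ∨ I k ω = 1)
    (hL2 : ∀ k, MemLp (I k) 2 μ)
    (hE : ∀ k, ∫ ω, I k ω ∂μ = π k)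
    (hE2 : ∀ k l, ∫ ω, I k ω * I l ω ∂μ = πkl k l)
    (hπlam : ∀ k, lam ≤ π k)
    (hΔ : ∀ k l, k ≠ l → n * |πkl k l - π k * π l| ≤ C)
    (x : Fin N → ℝ) (hx : ∀ k, |x k| ≤ 1) :
    variance (fun ω => (N : ℝ)⁻¹ * ∑ k, (I k ω / π k) * x k) μ
      ≤ (1 - lam) / (lam * N) + C / (lam ^ 2 * n) := by
  have hπpos : ∀ k, 0 < π k := fun k => lt_of_lt_of_le hlam (hπlam k)
  have hπne : ∀ k, π k ≠ 0 := fun k => (hπpos k).ne'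
  -- integrability facts
  have hIint : ∀ k, Integrable (I k) μ := fun k => (hL2 k).integrable one_le_two
  have hIm : ∀ k, AEStronglyMeasurable (I k) μ := fun k => (hL2 k).aestronglyMeasurable
  have hIbd : ∀ k ω, ‖I k ω‖ ≤ 1 := by
    intro k ω; rcases hind k ω with h | h <;> simp [h]
  have hprod : ∀ k l, Integrable (fun ω => I k ω * I l ω) μ := by
    intro k l
    refine (hIint k).mono ((hIm k).mul (hIm l)) (Filter.Eventually.of_forall fun ω => ?_)
    calc ‖I k ω * I l ω‖ = ‖I k ω‖ * ‖I l ω‖ := norm_mul _ _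
      _ ≤ ‖I k ω‖ * 1 := by
          exact mul_le_mul_of_nonneg_left (hIbd l ω) (norm_nonneg _)
      _ = ‖I k ω‖ := mul_one _
  -- π k ≤ 1
  have hπle1 : ∀ k, π k ≤ 1 := by
    intro k
    rw [← hE k]
    calc ∫ ω, I k ω ∂μ ≤ ∫ _ω, (1 : ℝ) ∂μ := by
          refine integral_mono (hIint k) (integrable_const 1) fun ω => ?_
          rcases hind k ω with h | h <;> simp [h]
      _ = 1 := by simp
  -- πkl k k = π k
  have hdiag : ∀ k, πkl k k = π k := by
    intro k
    rw [← hE2 k k, ← hE k]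
    refine integral_congr_ae (Filter.Eventually.of_forall fun ω => ?_)
    rcases hind k ω with h | h <;> simp [h]
  -- the sum S
  set f : Fin N → Ω → ℝ := fun k ω => (I k ω / π k) * x k with hf
  set S : Ω → ℝ := fun ω => ∑ k, f k ω with hS
  have hfk : ∀ k, f k = fun ω => (x k / π k) * I k ω := by
    intro k; funext ω; simp only [hf]; ring
  have hfL2 : ∀ k, MemLp (f k) 2 μ := by
    intro k; rw [hfk k]; exact (hL2 k).const_mul _
  have hfint : ∀ k, Integrable (f k) μ := fun k => (hfL2 k).integrable one_le_two
  have hSL2 : MemLp S 2 μ := by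
    have h := memLp_finset_sum' (μ := μ) (p := 2) Finset.univ (fun k (_ : k ∈ Finset.univ) => hfL2 k)
    have he : (∑ i : Fin N, f i) = S := by
      funext ω; rw [hS]; simp [Finset.sum_apply]
    rwa [he] at h
  -- expectation of S
  have hES : ∫ ω, S ω ∂μ = ∑ k, x k := by
    rw [hS]
    rw [integral_finset_sum _ fun k _ => hfint k]
    refine Finset.sum_congr rfl fun k _ => ?_
    rw [hfk k, integral_const_mul, hE k]
    exact div_mul_cancel₀ (x k) (hπne k)
  -- expectation of S^2
  have hES2 : ∫ ω, S ω ^ 2 ∂μ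
      = ∑ k, ∑ l, (x k / π k) * (x l / π l) * πkl k l := by
    have hsq : ∀ ω, S ω ^ 2 = ∑ k, ∑ l, (x k / π k) * (x l / π l) * (I k ω * I l ω) := by
      intro ω
      rw [hS, sq, Finset.sum_mul_sum]
      refine Finset.sum_congr rfl fun k _ => Finset.sum_congr rfl fun l _ => ?_
      simp only [hf]; ring
    calc ∫ ω, S ω ^ 2 ∂μ
        = ∫ ω, ∑ k, ∑ l, (x k / π k) * (x l / π l) * (I k ω * I l ω) ∂μ := by
          exact integral_congr_ae (Filter.Eventually.of_forall fun ω => hsq ω)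
      _ = ∑ k, ∑ l, (x k / π k) * (x l / π l) * πkl k l := by
          rw [integral_finset_sum _ fun k _ =>
            integrable_finset_sum _ fun l _ => (hprod k l).const_mul _]
          refine Finset.sum_congr rfl fun k _ => ?_
          rw [integral_finset_sum _ fun l _ => (hprod k l).const_mul _]
          refine Finset.sum_congr rfl fun l _ => ?_
          rw [integral_const_mul, hE2 k l]
  -- variance of S
  have hVarS : variance S μ
      = ∑ k, ∑ l, (x k / π k) * (x l / π l) * (πkl k l - π k * π l) := by
    rw [variance_eq_sub hSL2]
    have h1 : (∫ ω, (S ^ 2) ω ∂μ) = ∫ ω, S ω ^ 2 ∂μ := by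
      refine integral_congr_ae (Filter.Eventually.of_forall fun ω => ?_); simp
    rw [h1, hES2, hES]
    have h2 : (∑ k, x k) ^ 2 = ∑ k, ∑ l, (x k / π k) * (x l / π l) * (π k * π l) := by
      rw [sq, Finset.sum_mul_sum]
      refine Finset.sum_congr rfl fun k _ => Finset.sum_congr rfl fun l _ => ?_
      field_simp
      rw [mul_assoc (x k * x l), mul_div_assoc, div_self (mul_ne_zero (hπne k) (hπne l)), mul_one]
    rw [h2, ← Finset.sum_sub_distrib]
    refine Finset.sum_congr rfl fun k _ => ?_
    rw [← Finset.sum_sub_distrib]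
    refine Finset.sum_congr rfl fun l _ => ?_
    ring
  -- bound the variance of S
  have hbound : variance S μ
      ≤ (N : ℝ) * ((1 - lam) / lam) + (N : ℝ) ^ 2 * (C / (lam ^ 2 * n)) := by
    rw [hVarS]
    have hterm : ∀ k l : Fin N,
        (x k / π k) * (x l / π l) * (πkl k l - π k * π l)
          ≤ if k = l then (1 - lam) / lam else C / (lam ^ 2 * n) := by
      intro k l
      by_cases hkl : k = l
      · subst hkl
        simp only [if_pos rfl]
        have hd : (x k / π k) * (x k / π k) * (πkl k k - π k * π k)
            = x k ^ 2 * (1 / π k - 1) := by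
          rw [hdiag k]; field_simp [hπne k]
        rw [hd]
        have h1 : (0:ℝ) ≤ 1 / π k - 1 := by
          rw [sub_nonneg, le_div_iff₀ (hπpos k), one_mul]; exact hπle1 k
        have h2 : x k ^ 2 ≤ 1 := by
          have := hx k; nlinarith [abs_nonneg (x k), sq_abs (x k)]
        calc x k ^ 2 * (1 / π k - 1) ≤ 1 * (1 / π k - 1) :=
              mul_le_mul_of_nonneg_right h2 h1
          _ = 1 / π k - 1 := one_mul _
          _ ≤ 1 / lam - 1 := by
              have := one_div_le_one_div_of_le hlam (hπlam k); linarith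
          _ = (1 - lam) / lam := by field_simp
      · simp only [if_neg hkl]
        have habs : |πkl k l - π k * π l| ≤ C / n := by
          rw [le_div_iff₀ hn]; have := hΔ k l hkl; linarith [hΔ k l hkl]
        calc (x k / π k) * (x l / π l) * (πkl k l - π k * π l)
            ≤ |(x k / π k) * (x l / π l) * (πkl k l - π k * π l)| := le_abs_self _
          _ = (|x k| / π k) * (|x l| / π l) * |πkl k l - π k * π l| := by
              rw [abs_mul, abs_mul, abs_div, abs_div, abs_of_pos (hπpos k),
                abs_of_pos (hπpos l)]
          _ ≤ (1 / lam) * (1 / lam) * (C / n) := by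
              have hk1 : |x k| / π k ≤ 1 / lam := by
                apply div_le_div₀ (by norm_num) (hx k) hlam (hπlam k)
              have hl1 : |x l| / π l ≤ 1 / lam := by
                apply div_le_div₀ (by norm_num) (hx l) hlam (hπlam l)
              have h0k : 0 ≤ |x k| / π k := div_nonneg (abs_nonneg _) (hπpos k).le
              have h0l : 0 ≤ |x l| / π l := div_nonneg (abs_nonneg _) (hπpos l).le
              have h0a : 0 ≤ |πkl k l - π k * π l| := abs_nonneg _
              have h0lam : (0:ℝ) ≤ 1 / lam := by positivity
              exact mul_le_mul (mul_le_mul hk1 hl1 h0l h0lam) habs h0a (by positivity)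
          _ = C / (lam ^ 2 * n) := by
              rw [div_mul_div_comm, div_mul_div_comm, one_mul, one_mul, sq]
    calc ∑ k, ∑ l, (x k / π k) * (x l / π l) * (πkl k l - π k * π l)
        ≤ ∑ k : Fin N, ∑ l : Fin N,
            (if k = l then (1 - lam) / lam else C / (lam ^ 2 * n)) := by
          exact Finset.sum_le_sum fun k _ => Finset.sum_le_sum fun l _ => hterm k l
      _ ≤ (N : ℝ) * ((1 - lam) / lam) + (N : ℝ) ^ 2 * (C / (lam ^ 2 * n)) := by
          have hD : (0:ℝ) ≤ (1 - lam) / lam := by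
            apply div_nonneg _ hlam.le
            have := hπle1 ⟨0, hN⟩; have := hπlam ⟨0, hN⟩; linarith
          have hEb : (0:ℝ) ≤ C / (lam ^ 2 * n) := by positivity
          have : ∀ k l : Fin N,
              (if k = l then (1 - lam) / lam else C / (lam ^ 2 * n))
                ≤ (if k = l then (1 - lam) / lam else 0) + C / (lam ^ 2 * n) := by
            intro k l; by_cases h : k = l <;> simp [h, hD, hEb]
          calc ∑ k : Fin N, ∑ l : Fin N,
                (if k = l then (1 - lam) / lam else C / (lam ^ 2 * n))
              ≤ ∑ k : Fin N, ∑ l : Fin N,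
                ((if k = l then (1 - lam) / lam else 0) + C / (lam ^ 2 * n)) :=
                Finset.sum_le_sum fun k _ => Finset.sum_le_sum fun l _ => this k l
            _ = (N : ℝ) * ((1 - lam) / lam) + (N : ℝ) ^ 2 * (C / (lam ^ 2 * n)) := by
                simp [Finset.sum_add_distrib, Finset.sum_ite_eq, Finset.mul_sum]
                ring
  -- conclude
  have hvar : variance (fun ω => (N : ℝ)⁻¹ * ∑ k, (I k ω / π k) * x k) μ
      = ((N : ℝ)⁻¹) ^ 2 * variance S μ := by
    exact variance_const_mul ((N : ℝ)⁻¹) S μ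
  rw [hvar]
  have hNpos : (0:ℝ) < N := Nat.cast_pos.mpr hN
  have h2 : ((N : ℝ)⁻¹) ^ 2 * ((N : ℝ) * ((1 - lam) / lam) + (N : ℝ) ^ 2 * (C / (lam ^ 2 * n)))
      = (1 - lam) / (lam * N) + C / (lam ^ 2 * n) := by
    field_simp [hNpos.ne', hlam.ne', hn.ne']
  calc ((N : ℝ)⁻¹) ^ 2 * variance S μ
      ≤ ((N : ℝ)⁻¹) ^ 2 * ((N : ℝ) * ((1 - lam) / lam) + (N : ℝ) ^ 2 * (C / (lam ^ 2 * n))) :=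
        mul_le_mul_of_nonneg_left hbound (by positivity)
    _ = (1 - lam) / (lam * N) + C / (lam ^ 2 * n) := h2
end

section
/- Let $\mathbf B_s$ be an $n\times q$ matrix, $\mathbf\Pi_s$ an $n\times n$ positive-definite diagonal matrix, and suppose the vector of ones satisfies $\mathbf 1_s = \mathbf B_s\mathbf 1_q$ and $\mathbf 1_U = \mathbf B_U \mathbf 1_q$ (partition of unity of the B-spline basis over sample and population). If $\mathbf B_s'\mathbf\Pi_s^{-1}\mathbf B_s$ is invertible, then the unpenalized weight vector $\mathbf w_s = \mathbf\Pi_s^{-1}\mathbf 1_s - \mathbf\Pi_s^{-1}\mathbf B_s(\mathbf B_s'\mathbf\Pi_s^{-1}\mathbf B_s)^{-1}(\mathbf B_s'\mathbf\Pi_s^{-1}\mathbf 1_s - \mathbf B_U'\mathbf 1_U)$ simplifies to $\mathbf w_s = \mathbf\Pi_s^{-1}\mathbf B_s(\mathbf B_s'\mathbf\Pi_s^{-1}\mathbf B_s)^{-1}\mathbf B_U'\mathbf 1_U$. -/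
open Matrix

/-- Simplification of the unpenalized B-spline weights, using the partition of unity. -/
theorem stmt9 {n q N : ℕ}
    (Bs : Matrix (Fin n) (Fin q) ℝ) (BU : Matrix (Fin N) (Fin q) ℝ)
    (d : Fin n → ℝ) (hd : ∀ i, 0 < d i)
    (Ps : Matrix (Fin n) (Fin n) ℝ) (hPs : Ps = Matrix.diagonal d)
    (h1s : Bs.mulVec (fun _ => 1) = fun _ => 1)
    (h1U : BU.mulVec (fun _ => 1) = fun _ => 1)
    (hinv : IsUnit (Bsᵀ * Ps⁻¹ * Bs).det) :
    (Ps⁻¹.mulVec (fun _ => 1)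
        - (Ps⁻¹ * Bs * (Bsᵀ * Ps⁻¹ * Bs)⁻¹).mulVec
            (Bsᵀ.mulVec (Ps⁻¹.mulVec (fun _ => 1)) - BUᵀ.mulVec (fun _ => 1)))
      = (Ps⁻¹ * Bs * (Bsᵀ * Ps⁻¹ * Bs)⁻¹ * BUᵀ).mulVec (fun _ => 1) := by
  set M := Bsᵀ * Ps⁻¹ * Bs with hM
  have key : Bsᵀ.mulVec (Ps⁻¹.mulVec (fun _ => 1)) = M.mulVec (fun _ => 1) := by
    conv_lhs => rw [← h1s]
    simp [hM, mulVec_mulVec, Matrix.mul_assoc]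
  have h2 : (Ps⁻¹ * Bs * M⁻¹).mulVec (M.mulVec (fun _ => 1))
      = Ps⁻¹.mulVec (fun _ => 1) := by
    rw [mulVec_mulVec, Matrix.mul_assoc (Ps⁻¹ * Bs) M⁻¹ M, nonsing_inv_mul _ hinv,
      Matrix.mul_one, ← mulVec_mulVec, h1s]
  rw [key, mulVec_sub, h2]
  simp [mulVec_mulVec, Matrix.mul_assoc]
end

section
/- Let $T$ be Fréchet differentiable at $P=M/N$ with linear derivative $T'(P;\cdot)$ with respect to a pseudometric $d$: $|T(Q)-T(P)-T'(P;Q-P)| = o(d(Q,P))$ as $d(Q,P)\to 0$. Suppose $T$ is homogeneous of degree $\alpha$ and $T'(P;\Delta)=\int IT(P,y)\,d\Delta(y)$ with $IT(M/N,y)=N^{1-\alpha}IT(M,y)$. If random measures $\widehat M_n$ satisfy $d(\widehat M_n/N, M/N)=O_p(n^{-1/2})$, then $N^{-\alpha}\big(T(\widehat M_n)-T(M)\big) = N^{-\alpha}\int IT(M,y)\,d(\widehat M_n - M)(y) + o_p(n^{-1/2})$. -/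
open MeasureTheory Filter

/-- Abstract first linearization step: Fréchet differentiability with respect to a
pseudometric `d`, homogeneity of degree `α`, the scaling of the influence function, and
`d(M̂ₙ/N, M/N) = O_p(n^{-1/2})` imply
`N^{-α}(T(M̂ₙ) - T(M)) = N^{-α} ∫ IT(M,y) d(M̂ₙ - M)(y) + o_p(n^{-1/2})`. -/
theorem stmt17 {Ω : Type*} [MeasurableSpace Ω] (μ : Measure Ω) [IsProbabilityMeasure μ]
    (T : Measure ℝ → ℝ) (d : Measure ℝ → Measure ℝ → ℝ)
    (IT : Measure ℝ → ℝ → ℝ) (α N : ℝ) (hα : 0 < α) (hN : 0 < N)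
    (M : Measure ℝ)
    (hhom : ∀ r : ℝ, 0 < r → ∀ ν : Measure ℝ, T (ENNReal.ofReal r • ν) = r ^ α * T ν)
    (hfrechet : ∀ ε : ℝ, 0 < ε → ∃ δ : ℝ, 0 < δ ∧ ∀ Q : Measure ℝ,
      d Q (ENNReal.ofReal N⁻¹ • M) < δ →
        |T Q - T (ENNReal.ofReal N⁻¹ • M)
            - ((∫ y, IT (ENNReal.ofReal N⁻¹ • M) y ∂Q)
                - ∫ y, IT (ENNReal.ofReal N⁻¹ • M) y ∂(ENNReal.ofReal N⁻¹ • M))|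
          ≤ ε * d Q (ENNReal.ofReal N⁻¹ • M))
    (hIT : ∀ y, IT (ENNReal.ofReal N⁻¹ • M) y = N ^ ((1 : ℝ) - α) * IT M y)
    (Mh : ℕ → Ω → Measure ℝ)
    (hOp : ∀ δ : ℝ, 0 < δ → ∃ C : ℝ, 0 < C ∧ ∀ n : ℕ,
      (μ {ω | C * (n : ℝ) ^ (-(1 : ℝ) / 2)
          < d (ENNReal.ofReal N⁻¹ • Mh n ω) (ENNReal.ofReal N⁻¹ • M)}).toReal ≤ δ) :
    ∀ ε : ℝ, 0 < ε →
      Tendsto (fun n : ℕ =>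
          (μ {ω | ε * (n : ℝ) ^ (-(1 : ℝ) / 2)
              < |N ^ (-α) * (T (Mh n ω) - T M)
                  - N ^ (-α) * ((∫ y, IT M y ∂(Mh n ω)) - ∫ y, IT M y ∂M)|}).toReal)
        atTop (nhds 0) := by
  intro ε hε
  have hNinv : (0:ℝ) < N⁻¹ := inv_pos.2 hN
  have hc : (ENNReal.ofReal N⁻¹).toReal = N⁻¹ := ENNReal.toReal_ofReal hNinv.le
  have h1 : N⁻¹ ^ α = N ^ (-α) := by
    rw [Real.inv_rpow hN.le, ← Real.rpow_neg hN.le]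
  have h2 : N⁻¹ * N ^ ((1:ℝ) - α) = N ^ (-α) := by
    rw [← Real.rpow_neg_one N, ← Real.rpow_add hN]
    congr 1
    ring
  have hint : ∀ ν : Measure ℝ,
      ∫ y, IT (ENNReal.ofReal N⁻¹ • M) y ∂(ENNReal.ofReal N⁻¹ • ν)
        = N⁻¹ * (N ^ ((1:ℝ) - α) * ∫ y, IT M y ∂ν) := by
    intro ν
    rw [integral_smul_measure, hc]
    simp_rw [hIT]
    rw [MeasureTheory.integral_const_mul, smul_eq_mul]
  have key : ∀ ν : Measure ℝ,
      T (ENNReal.ofReal N⁻¹ • ν) - T (ENNReal.ofReal N⁻¹ • M)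
        - ((∫ y, IT (ENNReal.ofReal N⁻¹ • M) y ∂(ENNReal.ofReal N⁻¹ • ν))
            - ∫ y, IT (ENNReal.ofReal N⁻¹ • M) y ∂(ENNReal.ofReal N⁻¹ • M))
      = N ^ (-α) * (T ν - T M)
          - N ^ (-α) * ((∫ y, IT M y ∂ν) - ∫ y, IT M y ∂M) := by
    intro ν
    rw [hhom N⁻¹ hNinv ν, hhom N⁻¹ hNinv M, hint ν, hint M, h1]
    linear_combination ((∫ y, IT M y ∂M) - ∫ y, IT M y ∂ν) * h2
  rw [Metric.tendsto_atTop]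
  intro η hη
  obtain ⟨C, hC, hCbound⟩ := hOp (η / 2) (by positivity)
  obtain ⟨δ, hδ, hfre⟩ := hfrechet (ε / (2 * C)) (by positivity)
  have htend : Tendsto (fun n : ℕ => C * (n : ℝ) ^ (-(1:ℝ) / 2)) atTop (nhds 0) := by
    have h0 : Tendsto (fun x : ℝ => x ^ (-(1:ℝ) / 2)) atTop (nhds 0) := by
      have := tendsto_rpow_neg_atTop (y := (1:ℝ)/2) (by norm_num)
      simpa [neg_div] using this
    have := (h0.comp tendsto_natCast_atTop_atTop).const_mul C
    simpa using this
  obtain ⟨n₀, hn₀⟩ := (Metric.tendsto_atTop.1 htend) δ hδ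
  refine ⟨n₀, fun n hn => ?_⟩
  have hsmall : C * (n : ℝ) ^ (-(1:ℝ) / 2) < δ := by
    have := hn₀ n hn
    rw [Real.dist_eq, sub_zero] at this
    calc C * (n : ℝ) ^ (-(1:ℝ) / 2) ≤ |C * (n : ℝ) ^ (-(1:ℝ) / 2)| := le_abs_self _
      _ < δ := this
  have ht : (0:ℝ) ≤ (n : ℝ) ^ (-(1:ℝ) / 2) := Real.rpow_nonneg (Nat.cast_nonneg n) _
  have hsub : {ω | ε * (n : ℝ) ^ (-(1 : ℝ) / 2)
        < |N ^ (-α) * (T (Mh n ω) - T M)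
            - N ^ (-α) * ((∫ y, IT M y ∂(Mh n ω)) - ∫ y, IT M y ∂M)|}
      ⊆ {ω | C * (n : ℝ) ^ (-(1 : ℝ) / 2)
          < d (ENNReal.ofReal N⁻¹ • Mh n ω) (ENNReal.ofReal N⁻¹ • M)} := by
    intro ω hω
    simp only [Set.mem_setOf_eq] at hω ⊢
    by_contra hcon
    push_neg at hcon
    have hd := lt_of_le_of_lt hcon hsmall
    have habs := hfre _ hd
    rw [key (Mh n ω)] at habs
    have hdnn : d (ENNReal.ofReal N⁻¹ • Mh n ω) (ENNReal.ofReal N⁻¹ • M)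
        ≤ C * (n : ℝ) ^ (-(1:ℝ) / 2) := hcon
    have : ε * (n : ℝ) ^ (-(1:ℝ) / 2) < ε * (n : ℝ) ^ (-(1:ℝ) / 2) := by
      calc ε * (n : ℝ) ^ (-(1:ℝ) / 2)
          < |N ^ (-α) * (T (Mh n ω) - T M)
              - N ^ (-α) * ((∫ y, IT M y ∂(Mh n ω)) - ∫ y, IT M y ∂M)| := hω
        _ ≤ ε / (2 * C) * d (ENNReal.ofReal N⁻¹ • Mh n ω) (ENNReal.ofReal N⁻¹ • M) := habs
        _ ≤ ε / (2 * C) * (C * (n : ℝ) ^ (-(1:ℝ) / 2)) := by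
            apply mul_le_mul_of_nonneg_left hdnn (by positivity)
        _ = ε / 2 * (n : ℝ) ^ (-(1:ℝ) / 2) := by field_simp
        _ ≤ ε * (n : ℝ) ^ (-(1:ℝ) / 2) := by nlinarith
    exact lt_irrefl _ this
  have hmono : (μ {ω | ε * (n : ℝ) ^ (-(1 : ℝ) / 2)
        < |N ^ (-α) * (T (Mh n ω) - T M)
            - N ^ (-α) * ((∫ y, IT M y ∂(Mh n ω)) - ∫ y, IT M y ∂M)|}).toReal
      ≤ (μ {ω | C * (n : ℝ) ^ (-(1 : ℝ) / 2)
          < d (ENNReal.ofReal N⁻¹ • Mh n ω) (ENNReal.ofReal N⁻¹ • M)}).toReal :=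
    ENNReal.toReal_mono (measure_ne_top μ _) (measure_mono hsub)
  have hfin := le_trans hmono (hCbound n)
  rw [Real.dist_eq, sub_zero, abs_of_nonneg ENNReal.toReal_nonneg]
  linarith
end

section
/- (Poststratification as order-1 B-splines.) Let $[0,1]$ be partitioned into intervals $J_1,\dots,J_q$ and let $B_j = \mathbf 1_{J_j}$ (B-splines of order $m=1$). Suppose each poststratum sample count $n_j = \#\{k\in s : z_k\in J_j\}$ is positive and $\mathbf\Pi_s = \pi\,\mathbf I$ (equal inclusion probabilities). Then the weights $\mathbf w_s = \mathbf\Pi_s^{-1}\mathbf B_s(\mathbf B_s'\mathbf\Pi_s^{-1}\mathbf B_s)^{-1}\mathbf B_U'\mathbf 1_U$ satisfy $w_{ks} = N_j/n_j$ for every sampled $k$ with $z_k\in J_j$, where $N_j=\#\{k\in U: z_k\in J_j\}$; hence $\sum_{k\in s}w_{ks}y_k = \sum_{j=1}^q (N_j/n_j)\sum_{k\in s: z_k\in J_j} y_k$ is the classical poststratified estimator. -/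
open Matrix

/-- Poststratification as order-1 B-splines: with indicator basis functions and equal
inclusion probabilities, the B-spline weights are `N_j / n_j` and the resulting estimator
is the classical poststratified estimator. -/
theorem stmt19 (Np q : ℕ) (J : Fin q → ℝ → Prop) [∀ j, DecidablePred (J j)]
    (z : Fin Np → ℝ) (hz : ∀ k, z k ∈ Set.Icc (0 : ℝ) 1)
    (hpart : ∀ x ∈ Set.Icc (0 : ℝ) 1, ∃! j, J j x)
    (s : Finset (Fin Np)) (π : ℝ) (hπ : 0 < π)
    (Bs : Matrix {k // k ∈ s} (Fin q) ℝ)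
    (hBs : Bs = fun k j => if J j (z k.1) then 1 else 0)
    (BU : Matrix (Fin Np) (Fin q) ℝ)
    (hBU : BU = fun k j => if J j (z k) then 1 else 0)
    (nj : Fin q → ℕ) (hnj : ∀ j, nj j = (s.filter fun k => J j (z k)).card)
    (hnjpos : ∀ j, 0 < nj j)
    (Nj : Fin q → ℕ)
    (hNj : ∀ j, Nj j = (Finset.univ.filter fun k : Fin Np => J j (z k)).card)
    (w : {k // k ∈ s} → ℝ)
    (hw : w = ((π • (1 : Matrix {k // k ∈ s} {k // k ∈ s} ℝ))⁻¹ * Bs *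
        (Bsᵀ * (π • (1 : Matrix {k // k ∈ s} {k // k ∈ s} ℝ))⁻¹ * Bs)⁻¹ * BUᵀ).mulVec
        (fun _ => 1)) :
    (∀ (k : {k // k ∈ s}) (j : Fin q), J j (z k.1) → w k = (Nj j : ℝ) / (nj j : ℝ)) ∧
      ∀ y : Fin Np → ℝ,
        (∑ k : {k // k ∈ s}, w k * y k.1)
          = ∑ j, ((Nj j : ℝ) / (nj j : ℝ)) * ∑ k ∈ s.filter (fun k => J j (z k)), y k := by
  have hne : (π : ℝ) ≠ 0 := ne_of_gt hπ
  have hnjne : ∀ j, ((nj j : ℝ)) ≠ 0 := fun j =>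
    Nat.cast_ne_zero.mpr (hnjpos j).ne'
  have huniq : ∀ k : Fin Np, ∀ i j, J i (z k) → J j (z k) → i = j := by
    intro k i j hi hj
    obtain ⟨j0, _, hu⟩ := hpart (z k) (hz k)
    rw [hu i hi, hu j hj]
  set E : Matrix (Fin q) (Fin q) ℝ := Matrix.diagonal (fun j => ((nj j : ℝ))⁻¹) with hE
  -- inverse of π • 1
  have hinv1 : (π • (1 : Matrix {k // k ∈ s} {k // k ∈ s} ℝ))⁻¹
      = π⁻¹ • (1 : Matrix {k // k ∈ s} {k // k ∈ s} ℝ) := by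
    apply Matrix.inv_eq_right_inv
    rw [Matrix.smul_mul, Matrix.mul_smul, smul_smul, mul_inv_cancel₀ hne, one_smul,
      Matrix.one_mul]
  -- BsᵀBs = diagonal n
  have hBtB : Bsᵀ * Bs = Matrix.diagonal (fun j => (nj j : ℝ)) := by
    ext i j
    by_cases hij : i = j
    · subst hij
      simp only [Matrix.mul_apply, Matrix.transpose_apply]; simp only [hBs, Matrix.diagonal_apply_eq]
      rw [hnj]
      have h1 : ∀ x : {k // k ∈ s}, (if J i (z x.1) then (1:ℝ) else 0) *
          (if J i (z x.1) then (1:ℝ) else 0) = if J i (z x.1) then 1 else 0 := by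
        intro x; split_ifs <;> ring
      rw [Finset.sum_congr rfl fun x _ => h1 x,
        Finset.sum_coe_sort s (fun k => if J i (z k) then (1:ℝ) else 0)]
      simp [Finset.sum_boole]
    · simp only [Matrix.mul_apply, Matrix.transpose_apply]; simp only [hBs,
        Matrix.diagonal_apply_ne _ hij]
      apply Finset.sum_eq_zero
      intro k _
      by_cases h1 : J i (z k.1)
      · by_cases h2 : J j (z k.1)
        · exact absurd (huniq k.1 i j h1 h2) hij
        · simp [h1, h2]
      · simp [h1]
  -- inverse of the middle matrix
  have hmid : (Bsᵀ * (π • (1 : Matrix {k // k ∈ s} {k // k ∈ s} ℝ))⁻¹ * Bs)⁻¹ = π • E := by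
    rw [hinv1, Matrix.mul_smul, Matrix.mul_one, Matrix.smul_mul, hBtB]
    apply Matrix.inv_eq_right_inv
    rw [Matrix.smul_mul, Matrix.mul_smul, smul_smul, inv_mul_cancel₀ hne, one_smul, hE,
      Matrix.diagonal_mul_diagonal]
    have : (fun j => (nj j : ℝ) * ((nj j : ℝ))⁻¹) = fun _ => (1 : ℝ) := by
      funext j; exact mul_inv_cancel₀ (hnjne j)
    rw [this, Matrix.diagonal_one]
  -- closed form for w
  have hwk : ∀ k, w k = ∑ j, (if J j (z k.1) then (1:ℝ) else 0) * (((nj j : ℝ))⁻¹ * (Nj j : ℝ)) := by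
    intro k
    have hBUsum : ∀ j, (∑ l, BU l j) = (Nj j : ℝ) := by
      intro j
      rw [hBU, hNj]
      simp [Finset.sum_boole]
    rw [hw, hmid, hinv1]
    have hP : (π⁻¹ • (1 : Matrix {k // k ∈ s} {k // k ∈ s} ℝ)) * Bs * (π • E) * BUᵀ
        = Bs * E * BUᵀ := by
      rw [Matrix.smul_mul, Matrix.one_mul, Matrix.smul_mul, Matrix.mul_smul, smul_smul,
        inv_mul_cancel₀ hne, one_smul]
    rw [hP]
    simp only [Matrix.mulVec, dotProduct, mul_one]
    have : ∀ l, (Bs * E * BUᵀ) k l = ∑ j, Bs k j * ((nj j : ℝ))⁻¹ * BU l j := by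
      intro l
      rw [Matrix.mul_apply]
      refine Finset.sum_congr rfl fun j _ => ?_
      rw [hE, Matrix.mul_diagonal, Matrix.transpose_apply]
    simp only [this]
    rw [Finset.sum_comm]
    refine Finset.sum_congr rfl fun j _ => ?_
    rw [← Finset.mul_sum, hBUsum j, hBs]
    ring
  constructor
  · intro k j hj
    rw [hwk k]
    rw [Finset.sum_eq_single j]
    · simp [hj, div_eq_mul_inv, mul_comm]
    · intro j' _ hj'
      have : ¬ J j' (z k.1) := fun h => hj' (huniq k.1 j' j h hj)
      simp [this]
    · simp
  · intro y
    have : ∀ k : {k // k ∈ s}, w k * y k.1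
        = ∑ j, (if J j (z k.1) then ((Nj j : ℝ) / (nj j : ℝ)) * y k.1 else 0) := by
      intro k
      rw [hwk k, Finset.sum_mul]
      congr 1
      funext j
      by_cases h : J j (z k.1)
      · simp only [h, if_true, one_mul]
        rw [div_eq_mul_inv]; ring
      · simp [h]
    simp only [this]
    rw [Finset.sum_comm]
    congr 1
    funext j
    rw [Finset.sum_coe_sort s
      (fun k => if J j (z k) then ((Nj j : ℝ) / (nj j : ℝ)) * y k else 0),
      ← Finset.sum_filter, ← Finset.mul_sum]
end
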